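/- Let $F_{n,m}$ satisfy the contiguity relations $F_{n+1,m}-F_{n,m}=-a_0^2 q^{2n}F_{n,m-1}$ and $F_{n,m+1}-F_{n,m}=-a_2^{-2}q^{2m+2}F_{n-1,m}$ with $a_2=q^{1/2}$, and define $\hat G_{2n}=\Theta(a_0^2 q^{2n};q^2)F_{n,-1}$ and $\hat G_{2n-1}=\Theta(a_0^2 q^{2n};q^2)F_{n,0}$, where $\Theta(a;q)=(a;q)_\infty(q a^{-1};q)_\infty$. Then $\hat G$ satisfies $\hat G_{k+1}-\hat G_k+\frac{1}{a_0^2 q^k}\hat G_{k-1}=0$ for all $k\in\mathbb{Z}$. -/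

import Mathlib

/-- The infinite $q$-Pochhammer symbol $(a;q)_\infty=\prod_{i\ge 0}(1-aq^i)$. -/
noncomputable def qPochInf (a q : ℂ) : ℂ := ∏' i : ℕ, (1 - a * q ^ i)

/-- The Jacobi theta function $\Theta(a;q)=(a;q)_\infty (qa^{-1};q)_\infty$. -/
noncomputable def paperTheta (a q : ℂ) : ℂ := qPochInf a q * qPochInf (q * a⁻¹) q

open Filter Complex

private lemma hasProd_zero_of_eq_zero {f : ℕ → ℂ} {i : ℕ} (h : f i = 0) : HasProd f 0 := by
  unfold HasProd
  apply Tendsto.congr' _ tendsto_const_nhds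
  filter_upwards [Filter.eventually_ge_atTop ({i} : Finset ℕ)] with s hs
  exact (Finset.prod_eq_zero (hs (Finset.mem_singleton_self i)) h).symm

private lemma summable_log_aux (b q : ℂ) (hq : ‖q‖ < 1) :
    Summable (fun i : ℕ => Complex.log (1 - b * q ^ i)) := by
  have hg : Summable (fun i : ℕ => (3/2 : ℝ) * (‖b‖ * ‖q‖ ^ i)) :=
    ((summable_geometric_of_lt_one (norm_nonneg q) hq).mul_left _).mul_left _
  apply Summable.of_norm_bounded_eventually_nat hg
  have h0 : Tendsto (fun i : ℕ => ‖b‖ * ‖q‖ ^ i) atTop (nhds 0) := by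
    simpa using (tendsto_pow_atTop_nhds_zero_of_lt_one (norm_nonneg q) hq).const_mul
      (‖b‖)
  filter_upwards [h0.eventually_le_const (by norm_num : (0:ℝ) < 1/2)] with i hi
  have hz : ‖-(b * q ^ i)‖ ≤ 1/2 := by
    simpa [map_mul] using hi
  have := Complex.norm_log_one_add_half_le_self (z := -(b * q ^ i)) (by simpa using hz)
  simpa [sub_eq_add_neg, map_mul] using this

private lemma multipliable_aux (b q : ℂ) (hq : ‖q‖ < 1) :
    Multipliable (fun i : ℕ => 1 - b * q ^ i) := by
  by_cases h : ∃ i, 1 - b * q ^ i = 0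
  · obtain ⟨i, hi⟩ := h
    exact ⟨0, hasProd_zero_of_eq_zero hi⟩
  · push_neg at h
    exact Complex.multipliable_of_summable_log (summable_log_aux b q hq)

private lemma qPochInf_rec (b q : ℂ) (hq : ‖q‖ < 1) :
    qPochInf b q = (1 - b) * qPochInf (q * b) q := by
  have hshift : qPochInf (q * b) q = ∏' i : ℕ, (1 - b * q ^ (i + 1)) := by
    unfold qPochInf
    refine tprod_congr fun i => ?_
    rw [pow_succ]; ring
  rw [hshift]
  unfold qPochInf
  have hm : Multipliable (fun i : ℕ => 1 - b * q ^ (i + 1)) := by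
    refine (multipliable_aux (q * b) q hq).congr fun i => ?_
    rw [pow_succ]; ring
  rw [tprod_eq_zero_mul' (f := fun i : ℕ => 1 - b * q ^ i) hm]
  norm_num

private lemma theta_quasi (a q : ℂ) (ha : a ≠ 0) (hq0 : q ≠ 0) (hq : ‖q‖ < 1) :
    paperTheta (q * a) q = -a⁻¹ * paperTheta a q := by
  unfold paperTheta
  have h1 : qPochInf a q = (1 - a) * qPochInf (q * a) q := qPochInf_rec a q hq
  have h2 : q * (q * a)⁻¹ = a⁻¹ := by
    rw [mul_inv, ← mul_assoc, mul_inv_cancel₀ hq0, one_mul]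
  have h3 : qPochInf a⁻¹ q = (1 - a⁻¹) * qPochInf (q * a⁻¹) q := qPochInf_rec a⁻¹ q hq
  have key : -a⁻¹ * (1 - a) = 1 - a⁻¹ := by
    field_simp
    ring
  rw [h2, h3, h1, ← key]
  ring

theorem stmt5 (q a0 a2 : ℂ) (hq0 : q ≠ 0) (hq1 : ‖q‖ < 1) (ha0 : a0 ≠ 0)
    (ha2 : a2 ^ 2 = q) (F : ℤ → ℤ → ℂ) (G : ℤ → ℂ)
    (h1 : ∀ n m : ℤ, F (n + 1) m - F n m = -(a0 ^ 2 * q ^ (2 * n) * F n (m - 1)))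
    (h2 : ∀ n m : ℤ, F n (m + 1) - F n m = -((a2 ^ 2)⁻¹ * q ^ (2 * m + 2) * F (n - 1) m))
    (hGe : ∀ n : ℤ, G (2 * n) = paperTheta (a0 ^ 2 * q ^ (2 * n)) (q ^ 2) * F n (-1))
    (hGo : ∀ n : ℤ, G (2 * n - 1) = paperTheta (a0 ^ 2 * q ^ (2 * n)) (q ^ 2) * F n 0) :
    ∀ k : ℤ, G (k + 1) - G k + 1 / (a0 ^ 2 * q ^ k) * G (k - 1) = 0 := by
  have habs2 : ‖q ^ 2‖ < 1 := by
    rw [norm_pow]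
    exact pow_lt_one₀ (norm_nonneg q) hq1 (by norm_num)
  have hq2 : (q ^ 2 : ℂ) ≠ 0 := pow_ne_zero 2 hq0
  intro k
  obtain ⟨n, rfl | rfl⟩ := Int.even_or_odd' k
  · -- k = 2 * n
    have hA : (q : ℂ) ^ (2 * n) ≠ 0 := zpow_ne_zero _ hq0
    have ha : a0 ^ 2 * q ^ (2 * n) ≠ 0 := mul_ne_zero (pow_ne_zero 2 ha0) hA
    have hstep : a0 ^ 2 * q ^ (2 * (n + 1)) = q ^ 2 * (a0 ^ 2 * q ^ (2 * n)) := by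
      rw [show 2 * (n + 1) = 2 * n + 2 by ring, zpow_add₀ hq0,
        show ((2 : ℤ)) = ((2 : ℕ) : ℤ) by norm_num, zpow_natCast]
      ring
    have hquasi : paperTheta (a0 ^ 2 * q ^ (2 * (n + 1))) (q ^ 2)
        = -(a0 ^ 2 * q ^ (2 * n))⁻¹ * paperTheta (a0 ^ 2 * q ^ (2 * n)) (q ^ 2) := by
      rw [hstep]; exact theta_quasi _ _ ha hq2 habs2
    rw [show (2 * n : ℤ) + 1 = 2 * (n + 1) - 1 by ring, hGo (n + 1), hGe n, hGo n, hquasi]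
    have hF := h1 n 0
    norm_num at hF
    field_simp
    linear_combination (-(paperTheta (a0 ^ 2 * q ^ (2 * n)) (q ^ 2))) * hF
  · -- k = 2 * n + 1
    have hA : (q : ℂ) ^ (2 * n) ≠ 0 := zpow_ne_zero _ hq0
    have ha : a0 ^ 2 * q ^ (2 * n) ≠ 0 := mul_ne_zero (pow_ne_zero 2 ha0) hA
    have hstep : a0 ^ 2 * q ^ (2 * (n + 1)) = q ^ 2 * (a0 ^ 2 * q ^ (2 * n)) := by
      rw [show 2 * (n + 1) = 2 * n + 2 by ring, zpow_add₀ hq0,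
        show ((2 : ℤ)) = ((2 : ℕ) : ℤ) by norm_num, zpow_natCast]
      ring
    have hq1step : (q : ℂ) ^ (2 * n + 1) = q ^ (2 * n) * q := by
      rw [zpow_add₀ hq0, zpow_one]
    have hquasi : paperTheta (a0 ^ 2 * q ^ (2 * (n + 1))) (q ^ 2)
        = -(a0 ^ 2 * q ^ (2 * n))⁻¹ * paperTheta (a0 ^ 2 * q ^ (2 * n)) (q ^ 2) := by
      rw [hstep]; exact theta_quasi _ _ ha hq2 habs2
    rw [show (2 * n + 1 : ℤ) + 1 = 2 * (n + 1) by ring, hGe (n + 1),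
      show (2 * n + 1 : ℤ) - 1 = 2 * n by ring, hGe n, hq1step,
      show (2 * n + 1 : ℤ) = 2 * (n + 1) - 1 by ring, hGo (n + 1), hquasi]
    have hF := h2 (n + 1) (-1)
    norm_num at hF
    rw [ha2] at hF
    field_simp
    field_simp at hF
    linear_combination (paperTheta (a0 ^ 2 * q ^ (2 * n)) (q ^ 2))
      * 1 * hF
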